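/- For κ > 1, set m = 1, M = κ, S(κ) = √(κ² + (κ−1)²), R_2(κ) = (S(κ)−κ)/(2 + S(κ)−κ), and R_1(κ) = (κ−1)/(κ+1). Then lim_{κ→∞} κ·(1 − R_2(κ)) = 2(1+√2) and lim_{κ→∞} κ·(1 − R_1(κ)²) = 4. -/

import Mathlib

open Filter Topology

theorem sqrt2_gt_one : (1:ℝ) < Real.sqrt 2 := by
  nlinarith [Real.sq_sqrt (by norm_num : (0:ℝ) ≤ 2), Real.sqrt_nonneg 2]

/-- **Asymptotics of the two-step vs one-step rates:** as `κ → ∞`, with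
`S(κ) = √(κ² + (κ−1)²)`, `R₂(κ) = (S(κ)−κ)/(2+S(κ)−κ)` and `R₁(κ) = (κ−1)/(κ+1)`,
one has `κ(1 − R₂(κ)) → 2(1+√2)` (the silver ratio appears) while `κ(1 − R₁(κ)²) → 4`. -/
theorem two_step_rate_asymptotics :
    Tendsto
      (fun κ : ℝ =>
        κ * (1 - (Real.sqrt (κ ^ 2 + (κ - 1) ^ 2) - κ) /
          (2 + Real.sqrt (κ ^ 2 + (κ - 1) ^ 2) - κ)))
      atTop (𝓝 (2 * (1 + Real.sqrt 2))) ∧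
    Tendsto (fun κ : ℝ => κ * (1 - ((κ - 1) / (κ + 1)) ^ 2)) atTop (𝓝 4) := by
  have hinv : Tendsto (fun κ : ℝ => 1 / κ) atTop (𝓝 0) := by
    simpa using tendsto_inv_atTop_zero
  constructor
  · -- denominator limit
    have hden : Tendsto (fun κ : ℝ => 2 / κ + Real.sqrt (1 + (1 - 1 / κ) ^ 2) - 1)
        atTop (𝓝 (Real.sqrt 2 - 1)) := by
      have h0 : Tendsto (fun κ : ℝ => 2 / κ) atTop (𝓝 0) := by
        have := hinv.const_mul (2:ℝ)
        simpa [mul_one_div, div_eq_mul_inv] using this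
      have h2 : Tendsto (fun κ : ℝ => 1 + (1 - 1 / κ) ^ 2) atTop (𝓝 2) := by
        have h1 : Tendsto (fun κ : ℝ => 1 - 1 / κ) atTop (𝓝 1) := by
          simpa using tendsto_const_nhds.sub hinv
        have := (h1.pow 2).const_add (1:ℝ)
        norm_num at this
        simpa [one_div] using this.congr (fun x => by norm_num)
      have hs : Tendsto (fun κ : ℝ => Real.sqrt (1 + (1 - 1 / κ) ^ 2)) atTop
          (𝓝 (Real.sqrt 2)) := (Real.continuous_sqrt.continuousAt.tendsto).comp h2
      simpa using (h0.add hs).sub tendsto_const_nhds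
    have hne : Real.sqrt 2 - 1 ≠ 0 := by
      have := sqrt2_gt_one; linarith
    have hg : Tendsto (fun κ : ℝ => 2 / (2 / κ + Real.sqrt (1 + (1 - 1 / κ) ^ 2) - 1))
        atTop (𝓝 (2 / (Real.sqrt 2 - 1))) := tendsto_const_nhds.div hden hne
    have hval : 2 / (Real.sqrt 2 - 1) = 2 * (1 + Real.sqrt 2) := by
      rw [div_eq_iff hne]
      have h2 : Real.sqrt 2 ^ 2 = 2 := Real.sq_sqrt (by norm_num)
      nlinarith [h2]
    rw [← hval]
    refine hg.congr' ?_
    filter_upwards [eventually_gt_atTop (0:ℝ)] with κ hκ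
    set S := Real.sqrt (κ ^ 2 + (κ - 1) ^ 2) with hSdef
    have hSnn : 0 ≤ S := Real.sqrt_nonneg _
    have hSk : κ ≤ S := by
      have hk : κ = Real.sqrt (κ ^ 2) := (Real.sqrt_sq hκ.le).symm
      calc κ = Real.sqrt (κ ^ 2) := hk
        _ ≤ S := by rw [hSdef]; exact Real.sqrt_le_sqrt (by nlinarith)
    have hSval : Real.sqrt (1 + (1 - 1 / κ) ^ 2) = S / κ := by
      have harg : 1 + (1 - 1 / κ) ^ 2 = (κ ^ 2 + (κ - 1) ^ 2) / κ ^ 2 := by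
        field_simp
      rw [harg]
      rw [Real.sqrt_div (by positivity : (0:ℝ) ≤ κ ^ 2 + (κ - 1) ^ 2)]
      rw [Real.sqrt_sq hκ.le]
    rw [hSval]
    have hd : (0:ℝ) < 2 + S - κ := by linarith
    field_simp
    ring
  · have h4 : Tendsto (fun κ : ℝ => 4 / (1 + 1 / κ) ^ 2) atTop (𝓝 4) := by
      have hden : Tendsto (fun κ : ℝ => (1 + 1 / κ) ^ 2) atTop (𝓝 1) := by
        have h1 : Tendsto (fun κ : ℝ => 1 + 1 / κ) atTop (𝓝 1) := by
          simpa using tendsto_const_nhds.add hinv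
        simpa using h1.pow 2
      have := (tendsto_const_nhds : Tendsto (fun _ : ℝ => (4:ℝ)) atTop (𝓝 4)).div hden
        (by norm_num : (1:ℝ) ≠ 0)
      simpa [Pi.div_def] using this
    refine h4.congr' ?_
    filter_upwards [eventually_gt_atTop (0:ℝ)] with κ hκ
    have h1 : κ + 1 ≠ 0 := by linarith
    field_simp
    ring
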